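/- arXiv:1007.0678 — 3 statements merged into one kernel-verified Lean document; each statement's English description precedes it below -/
import Mathlib

section
/- Let G be a countable group equipped with a left-invariant proper metric d, and let H be a separable subgroup of G (i.e., H is the intersection of a family of finite index subgroups of G). Then H has bounded packing in G: for every positive constant D there exists a natural number N such that every collection of left H-cosets in G that are pairwise at distance at most D from each other has cardinality at most N. -/
open scoped Pointwise

/-- The distance between two subsets of `G` induced by a metric `d`:
`inf { d x y : x ∈ A, y ∈ B }`. -/
noncomputable def cosetDist {G : Type*} (d : G → G → ℝ) (A B : Set G) : ℝ :=
  sInf {r : ℝ | ∃ x ∈ A, ∃ y ∈ B, d x y = r}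

/-- If `H` is a separable subgroup of a countable group `G` equipped with a
left-invariant proper metric `d`, then `H` has bounded packing in `G`. -/
theorem separable_subgroup_bounded_packing
    {G : Type*} [Group G] [Countable G]
    (d : G → G → ℝ)
    (d_self : ∀ x y : G, d x y = 0 ↔ x = y)
    (d_symm : ∀ x y : G, d x y = d y x)
    (d_triangle : ∀ x y z : G, d x z ≤ d x y + d y z)
    (d_leftInvariant : ∀ g x y : G, d (g * x) (g * y) = d x y)
    (d_proper : ∀ R : ℝ, 0 < R → {g : G | d 1 g ≤ R}.Finite)
    (H : Subgroup G)
    (h_separable : ∃ 𝒮 : Set (Subgroup G),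
      (∀ K ∈ 𝒮, K.FiniteIndex) ∧ H = sInf 𝒮) :
    ∀ D : ℝ, 0 < D → ∃ N : ℕ,
      ∀ 𝒞 : Set (Set G),
        (∀ A ∈ 𝒞, ∃ g : G, A = g • (H : Set G)) →
        (∀ A ∈ 𝒞, ∀ B ∈ 𝒞, cosetDist d A B ≤ D) →
        𝒞.Finite ∧ 𝒞.ncard ≤ N := by
  classical
  obtain ⟨𝒮, h𝒮fi, hH⟩ := h_separable
  intro D hD
  have d_nonneg : ∀ x y : G, 0 ≤ d x y := by
    intro x y
    have h1 : d x x = 0 := (d_self x x).mpr rfl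
    have h2 := d_triangle x y x
    rw [h1, d_symm y x] at h2
    linarith
  set F : Set G := {g : G | d 1 g ≤ D + 1} with hF
  have hFfin : F.Finite := d_proper (D + 1) (by linarith)
  -- choose for each g ∈ F \ H a finite-index subgroup avoiding g
  have hchoice : ∀ g ∈ F \ (H : Set G), ∃ K ∈ 𝒮, g ∉ K := by
    intro g hg
    by_contra hc
    push_neg at hc
    exact hg.2 (hH ▸ (Subgroup.mem_sInf.mpr hc))
  let K : G → Subgroup G := fun g =>
    if h : g ∈ F \ (H : Set G) then (hchoice g h).choose else ⊤
  have hKfi : ∀ g, (K g).FiniteIndex := by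
    intro g
    by_cases h : g ∈ F \ (H : Set G)
    · simp only [K, dif_pos h]
      exact h𝒮fi _ (hchoice g h).choose_spec.1
    · simp only [K, dif_neg h]
      infer_instance
  have hKnotmem : ∀ g (h : g ∈ F \ (H : Set G)), g ∉ K g := by
    intro g h
    simp only [K, dif_pos h]
    exact (hchoice g h).choose_spec.2
  have hHK : ∀ g, H ≤ K g := by
    intro g
    by_cases h : g ∈ F \ (H : Set G)
    · simp only [K, dif_pos h]
      exact hH ▸ sInf_le (hchoice g h).choose_spec.1
    · simp only [K, dif_neg h]
      exact le_top
  have hsfin : (F \ (H : Set G)).Finite := hFfin.diff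
  haveI : Finite (F \ (H : Set G) : Set G) := hsfin.to_subtype
  let L : Subgroup G := ⨅ g : (F \ (H : Set G) : Set G), K g
  haveI hLfi : L.FiniteIndex := Subgroup.finiteIndex_iInf fun g => hKfi g
  have hHL : H ≤ L := le_iInf fun g => hHK g
  -- F ∩ L ⊆ H
  have hFL : ∀ f ∈ F, f ∈ L → f ∈ H := by
    intro f hf hfL
    by_contra hfH
    have hmem : f ∈ F \ (H : Set G) := ⟨hf, hfH⟩
    exact hKnotmem f hmem (iInf_le (fun g : (F \ (H : Set G) : Set G) => K g) ⟨f, hmem⟩ hfL)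
  -- key lemma
  have key : ∀ a b : G, cosetDist d (a • (H : Set G)) (b • (H : Set G)) ≤ D →
      a⁻¹ * b ∈ L → a • (H : Set G) = b • (H : Set G) := by
    intro a b hdist hL
    set S : Set ℝ := {r : ℝ | ∃ x ∈ a • (H : Set G), ∃ y ∈ b • (H : Set G), d x y = r} with hS
    have hSne : S.Nonempty := by
      refine ⟨d a b, a, ?_, b, ?_, rfl⟩
      · exact ⟨1, H.one_mem, by simp⟩
      · exact ⟨1, H.one_mem, by simp⟩
    have hSbdd : BddBelow S := by
      refine ⟨0, ?_⟩
      rintro r ⟨x, _, y, _, rfl⟩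
      exact d_nonneg x y
    have hlt : sInf S < D + 1 := lt_of_le_of_lt hdist (by linarith)
    obtain ⟨r, ⟨x, hx, y, hy, rfl⟩, hrlt⟩ := (csInf_lt_iff hSbdd hSne).mp hlt
    obtain ⟨h₁, hh₁, rfl⟩ := hx
    obtain ⟨h₂, hh₂, rfl⟩ := hy
    have hdf : d 1 (h₁⁻¹ * (a⁻¹ * b) * h₂) = d (a • h₁) (b • h₂) := by
      have := d_leftInvariant (a * h₁) 1 (h₁⁻¹ * (a⁻¹ * b) * h₂)
      rw [mul_one] at this
      rw [← this]
      show _ = d (a * h₁) (b * h₂)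
      congr 1
      group
    have hfF : h₁⁻¹ * (a⁻¹ * b) * h₂ ∈ F := by
      simp only [hF, Set.mem_setOf_eq, hdf]
      exact le_of_lt hrlt
    have hfL : h₁⁻¹ * (a⁻¹ * b) * h₂ ∈ L :=
      L.mul_mem (L.mul_mem (L.inv_mem (hHL hh₁)) hL) (hHL hh₂)
    have hfH : h₁⁻¹ * (a⁻¹ * b) * h₂ ∈ H := hFL _ hfF hfL
    have habH : a⁻¹ * b ∈ H := by
      have := H.mul_mem (H.mul_mem hh₁ hfH) (H.inv_mem hh₂)
      convert this using 1
      group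
    exact (leftCoset_eq_iff H).mpr habH
  refine ⟨Nat.card (G ⧸ L), ?_⟩
  intro 𝒞 h𝒞coset h𝒞dist
  have hrep : ∀ A : 𝒞, ∃ g : G, (A : Set G) = g • (H : Set G) := fun A => h𝒞coset A A.2
  let rep : 𝒞 → G := fun A => (hrep A).choose
  have hrepspec : ∀ A : 𝒞, (A : Set G) = rep A • (H : Set G) := fun A => (hrep A).choose_spec
  let φ : 𝒞 → G ⧸ L := fun A => QuotientGroup.mk (rep A)
  have hinj : Function.Injective φ := by
    intro A B hab
    have hL : (rep A)⁻¹ * rep B ∈ L := QuotientGroup.eq.mp hab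
    have hdist := h𝒞dist A A.2 B B.2
    rw [hrepspec A, hrepspec B] at hdist
    have := key (rep A) (rep B) hdist hL
    apply Subtype.ext
    calc (A : Set G) = rep A • (H : Set G) := hrepspec A
      _ = rep B • (H : Set G) := this
      _ = B := (hrepspec B).symm
  haveI : Finite (G ⧸ L) := L.finite_quotient_of_finiteIndex
  haveI hfin𝒞 : Finite 𝒞 := Finite.of_injective φ hinj
  refine ⟨Set.finite_coe_iff.mp hfin𝒞, ?_⟩
  calc 𝒞.ncard = Nat.card 𝒞 := (Nat.card_coe_set_eq 𝒞).symm
    _ ≤ Nat.card (G ⧸ L) := Nat.card_le_card_of_injective φ hinj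
end

section
/- Let G be a countable group equipped with a left-invariant proper metric d, and suppose that every subgroup of G is separable (for example, G virtually polycyclic). Then every subgroup H of G has bounded packing in G: for every positive constant D there exists a natural number N such that every collection of left H-cosets in G that are pairwise at distance at most D from each other has cardinality at most N. -/
open scoped Pointwise

/-- If every subgroup of a countable group `G` with a left-invariant proper
metric `d` is separable, then every subgroup of `G` has bounded packing in `G`. -/
theorem every_subgroup_bounded_packing_of_all_separable
    {G : Type*} [Group G] [Countable G]
    (d : G → G → ℝ)
    (d_self : ∀ x y : G, d x y = 0 ↔ x = y)
    (d_symm : ∀ x y : G, d x y = d y x)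
    (d_triangle : ∀ x y z : G, d x z ≤ d x y + d y z)
    (d_leftInvariant : ∀ g x y : G, d (g * x) (g * y) = d x y)
    (d_proper : ∀ R : ℝ, 0 < R → {g : G | d 1 g ≤ R}.Finite)
    (h_all_separable : ∀ H : Subgroup G, ∃ 𝒮 : Set (Subgroup G),
      (∀ K ∈ 𝒮, K.FiniteIndex) ∧ H = sInf 𝒮) :
    ∀ H : Subgroup G, ∀ D : ℝ, 0 < D → ∃ N : ℕ,
      ∀ 𝒞 : Set (Set G),
        (∀ A ∈ 𝒞, ∃ g : G, A = g • (H : Set G)) →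
        (∀ A ∈ 𝒞, ∀ B ∈ 𝒞, cosetDist d A B ≤ D) →
        𝒞.Finite ∧ 𝒞.ncard ≤ N := by
  intro H D hD
  -- nonnegativity of d
  have d_nonneg : ∀ x y : G, 0 ≤ d x y := by
    intro x y
    have h1 : d x x = 0 := (d_self x x).mpr rfl
    have h2 := d_triangle x y x
    rw [h1, d_symm y x] at h2
    linarith
  -- the finite ball of radius D+1
  set F : Set G := {g : G | d 1 g ≤ D + 1} with hFdef
  have hFfin : F.Finite := d_proper (D + 1) (by linarith)
  -- separability data
  obtain ⟨𝒮, h𝒮fi, h𝒮inf⟩ := h_all_separable H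
  -- for each b, a finite-index subgroup containing H and avoiding b if b ∉ H
  have hex : ∀ b : G, ∃ K : Subgroup G, K.FiniteIndex ∧ H ≤ K ∧ (b ∉ H → b ∉ K) := by
    intro b
    by_cases hb : b ∈ H
    · exact ⟨⊤, inferInstance, le_top, fun h => absurd hb h⟩
    · have : ∃ K ∈ 𝒮, b ∉ K := by
        by_contra hc
        push_neg at hc
        exact hb (h𝒮inf ▸ Subgroup.mem_sInf.mpr hc)
      obtain ⟨K, hK𝒮, hbK⟩ := this
      exact ⟨K, h𝒮fi K hK𝒮, h𝒮inf ▸ sInf_le hK𝒮, fun _ => hbK⟩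
  choose k hk1 hk2 hk3 using hex
  -- the finite-index subgroup K
  set K : Subgroup G := ⨅ b : hFfin.toFinset, k b with hKdef
  haveI : ∀ b : hFfin.toFinset, (k (b : G)).FiniteIndex := fun b => hk1 b
  haveI hKfi : K.FiniteIndex := Subgroup.finiteIndex_iInf (fun b => hk1 b)
  haveI : Finite (G ⧸ K) := @Subgroup.finite_quotient_of_finiteIndex G _ K hKfi
  have hHK : H ≤ K := le_iInf fun b => hk2 b
  have hKF : ∀ f₀ ∈ F, f₀ ∈ K → f₀ ∈ H := by
    intro f₀ hf₀F hf₀K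
    by_contra hf₀H
    have hle : K ≤ k f₀ := iInf_le _ (⟨f₀, hFfin.mem_toFinset.mpr hf₀F⟩ : hFfin.toFinset)
    exact hk3 f₀ hf₀H (hle hf₀K)
  refine ⟨K.index, fun 𝒞 hcoset hdist => ?_⟩
  -- choose a representative for each coset in 𝒞
  have hrep : ∀ A : 𝒞, ∃ g : G, (A : Set G) = g • (H : Set G) := fun A => hcoset A A.2
  choose g hg using hrep
  -- the map to G ⧸ K
  have hinj : Function.Injective (fun A : 𝒞 => (QuotientGroup.mk (g A) : G ⧸ K)) := by
    intro A₁ A₂ hAeq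
    simp only [QuotientGroup.eq] at hAeq
    -- extract nearby points
    have hS : cosetDist d (A₁ : Set G) (A₂ : Set G) ≤ D := hdist _ A₁.2 _ A₂.2
    have hex2 : ∃ x ∈ (A₁ : Set G), ∃ y ∈ (A₂ : Set G), d x y < D + 1 := by
      by_contra hc
      push_neg at hc
      have : D + 1 ≤ cosetDist d (A₁ : Set G) (A₂ : Set G) := by
        apply le_csInf
        · exact ⟨d (g A₁) (g A₂), g A₁, by rw [hg A₁]; exact ⟨1, H.one_mem, mul_one _⟩,
            g A₂, by rw [hg A₂]; exact ⟨1, H.one_mem, mul_one _⟩, rfl⟩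
        · rintro r ⟨x, hx, y, hy, rfl⟩
          exact hc x hx y hy
      linarith
    obtain ⟨x, hx, y, hy, hxy⟩ := hex2
    rw [hg A₁] at hx
    rw [hg A₂] at hy
    obtain ⟨h₁, hh₁, hx'⟩ := hx
    obtain ⟨h₂, hh₂, hy'⟩ := hy
    simp only [smul_eq_mul] at hx' hy'
    subst hx'; subst hy'
    -- the element f₀ = x⁻¹ * y lies in the ball F
    have hdF : d 1 ((g A₁ * h₁)⁻¹ * (g A₂ * h₂)) ≤ D + 1 := by
      have := d_leftInvariant (g A₁ * h₁)⁻¹ (g A₁ * h₁) (g A₂ * h₂)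
      rw [inv_mul_cancel] at this
      rw [this]
      linarith
    have hf₀F : (g A₁ * h₁)⁻¹ * (g A₂ * h₂) ∈ F := hdF
    -- and it lies in K
    have hf₀K : (g A₁ * h₁)⁻¹ * (g A₂ * h₂) ∈ K := by
      have e : (g A₁ * h₁)⁻¹ * (g A₂ * h₂) = h₁⁻¹ * ((g A₁)⁻¹ * g A₂) * h₂ := by
        group
      rw [e]
      exact K.mul_mem (K.mul_mem (K.inv_mem (hHK hh₁)) hAeq) (hHK hh₂)
    have hf₀H : (g A₁ * h₁)⁻¹ * (g A₂ * h₂) ∈ H := hKF _ hf₀F hf₀K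
    -- hence the cosets agree
    have hgH : (g A₁)⁻¹ * g A₂ ∈ H := by
      have e : (g A₁)⁻¹ * g A₂ = h₁ * ((g A₁ * h₁)⁻¹ * (g A₂ * h₂)) * h₂⁻¹ := by
        group
      rw [e]
      exact H.mul_mem (H.mul_mem hh₁ hf₀H) (H.inv_mem hh₂)
    have hsets : (A₁ : Set G) = (A₂ : Set G) := by
      rw [hg A₁, hg A₂]
      ext z
      constructor
      · rintro ⟨h, hh, rfl⟩
        exact ⟨((g A₂)⁻¹ * g A₁) * h, H.mul_mem (by simpa using H.inv_mem hgH) hh,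
          by simp [smul_eq_mul]; group⟩
      · rintro ⟨h, hh, rfl⟩
        exact ⟨((g A₁)⁻¹ * g A₂) * h, H.mul_mem hgH hh,
          by simp [smul_eq_mul]; group⟩
    exact Subtype.ext hsets
  haveI : Finite 𝒞 := Finite.of_injective _ hinj
  constructor
  · exact Set.toFinite 𝒞
  · calc 𝒞.ncard = Nat.card 𝒞 := (Nat.card_coe_set_eq 𝒞).symm
      _ ≤ Nat.card (G ⧸ K) := Nat.card_le_card_of_injective _ hinj
      _ = K.index := rfl
end

section
/- Bounded packing of a subgroup is independent of the choice of left-invariant proper metric: if d and d' are two left-invariant proper metrics on a countable group G and a subgroup H ≤ G has bounded packing in G with respect to d, then H has bounded packing in G with respect to d'. -/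
open scoped Pointwise

/-- Bounded packing is independent of the choice of left-invariant proper metric:
if a subgroup `H` of a countable group `G` has bounded packing with respect to a
left-invariant proper metric `d`, then it has bounded packing with respect to any
other left-invariant proper metric `d'`. -/
theorem bounded_packing_independent_of_metric
    {G : Type*} [Group G] [Countable G]
    (d d' : G → G → ℝ)
    (d_self : ∀ x y : G, d x y = 0 ↔ x = y)
    (d_symm : ∀ x y : G, d x y = d y x)
    (d_triangle : ∀ x y z : G, d x z ≤ d x y + d y z)
    (d_leftInvariant : ∀ g x y : G, d (g * x) (g * y) = d x y)
    (d_proper : ∀ R : ℝ, 0 < R → {g : G | d 1 g ≤ R}.Finite)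
    (d'_self : ∀ x y : G, d' x y = 0 ↔ x = y)
    (d'_symm : ∀ x y : G, d' x y = d' y x)
    (d'_triangle : ∀ x y z : G, d' x z ≤ d' x y + d' y z)
    (d'_leftInvariant : ∀ g x y : G, d' (g * x) (g * y) = d' x y)
    (d'_proper : ∀ R : ℝ, 0 < R → {g : G | d' 1 g ≤ R}.Finite)
    (H : Subgroup G)
    (h_packing : ∀ D : ℝ, 0 < D → ∃ N : ℕ,
      ∀ 𝒞 : Set (Set G),
        (∀ A ∈ 𝒞, ∃ g : G, A = g • (H : Set G)) →
        (∀ A ∈ 𝒞, ∀ B ∈ 𝒞, cosetDist d A B ≤ D) →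
        𝒞.Finite ∧ 𝒞.ncard ≤ N) :
    ∀ D : ℝ, 0 < D → ∃ N : ℕ,
      ∀ 𝒞 : Set (Set G),
        (∀ A ∈ 𝒞, ∃ g : G, A = g • (H : Set G)) →
        (∀ A ∈ 𝒞, ∀ B ∈ 𝒞, cosetDist d' A B ≤ D) →
        𝒞.Finite ∧ 𝒞.ncard ≤ N := by
  -- nonnegativity of the metrics
  have d_nonneg : ∀ x y : G, 0 ≤ d x y := by
    intro x y
    have h0 : d x x = 0 := (d_self x x).2 rfl
    have := d_triangle x y x
    rw [h0, d_symm y x] at this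
    linarith
  have d'_nonneg : ∀ x y : G, 0 ≤ d' x y := by
    intro x y
    have h0 : d' x x = 0 := (d'_self x x).2 rfl
    have := d'_triangle x y x
    rw [h0, d'_symm y x] at this
    linarith
  intro D hD
  -- the d'-ball of radius D+1 is finite
  have hS' : {g : G | d' 1 g ≤ D + 1}.Finite := d'_proper (D + 1) (by linarith)
  set S' := {g : G | d' 1 g ≤ D + 1} with hS'def
  have hne : S'.Nonempty := ⟨1, by simp [hS'def, (d'_self 1 1).2 rfl]; linarith⟩
  -- bound d on this finite set
  have himg : ((fun g => d 1 g) '' S').Finite := hS'.image _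
  have hbdd : BddAbove ((fun g => d 1 g) '' S') := himg.bddAbove
  set M := sSup ((fun g => d 1 g) '' S') with hM
  have hMle : ∀ g ∈ S', d 1 g ≤ M := fun g hg => le_csSup hbdd ⟨g, hg, rfl⟩
  set D2 : ℝ := max M 1 with hD2
  have hD2pos : 0 < D2 := lt_of_lt_of_le one_pos (le_max_right _ _)
  obtain ⟨N, hN⟩ := h_packing D2 hD2pos
  refine ⟨N, fun 𝒞 hcoset hdist => ?_⟩
  refine hN 𝒞 hcoset (fun A hA B hB => ?_)
  obtain ⟨g, hg⟩ := hcoset A hA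
  obtain ⟨g', hg'⟩ := hcoset B hB
  have hAne : g ∈ A := by
    rw [hg]; exact ⟨1, H.one_mem, mul_one g⟩
  have hBne : g' ∈ B := by
    rw [hg']; exact ⟨1, H.one_mem, mul_one g'⟩
  -- the set of d'-distances is nonempty and bounded below
  have hT'ne : {r : ℝ | ∃ x ∈ A, ∃ y ∈ B, d' x y = r}.Nonempty :=
    ⟨d' g g', g, hAne, g', hBne, rfl⟩
  have hT'bdd : BddBelow {r : ℝ | ∃ x ∈ A, ∃ y ∈ B, d' x y = r} := by
    refine ⟨0, fun r hr => ?_⟩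
    obtain ⟨x, _, y, _, rfl⟩ := hr
    exact d'_nonneg x y
  have hlt : cosetDist d' A B < D + 1 := lt_of_le_of_lt (hdist A hA B hB) (by linarith)
  obtain ⟨r, hrmem, hrlt⟩ := exists_lt_of_csInf_lt hT'ne hlt
  obtain ⟨x, hx, y, hy, rfl⟩ := hrmem
  -- transfer to the d-metric
  have hinv' : d' 1 (x⁻¹ * y) = d' x y := by
    have := d'_leftInvariant x 1 (x⁻¹ * y)
    simpa [mul_one] using this.symm
  have hmem : x⁻¹ * y ∈ S' := by
    simp only [hS'def, Set.mem_setOf_eq, hinv']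
    linarith
  have hdxy : d x y ≤ M := by
    have hinv : d 1 (x⁻¹ * y) = d x y := by
      have := d_leftInvariant x 1 (x⁻¹ * y)
      simpa [mul_one] using this.symm
    rw [← hinv]; exact hMle _ hmem
  have hTbdd : BddBelow {r : ℝ | ∃ x ∈ A, ∃ y ∈ B, d x y = r} := by
    refine ⟨0, fun r hr => ?_⟩
    obtain ⟨x, _, y, _, rfl⟩ := hr
    exact d_nonneg x y
  calc cosetDist d A B ≤ d x y := csInf_le hTbdd ⟨x, hx, y, hy, rfl⟩
    _ ≤ M := hdxy
    _ ≤ D2 := le_max_left _ _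
end
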